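/- Let L > 0 and let ρ : [0,L] → ℝ be continuously differentiable with ρ(x) > 0 for all x ∈ [0,L], and suppose there exists x₀ ∈ [0,L] with ρ(x₀) = ρ̄. Then for every x ∈ [0,L], |Ψ(ρ(x))| ≤ (∫₀^L G(ρ(y)) dy)^{1/2} · (∫₀^L ρ(y)·((d/dy)(1/ρ(y)))² dy)^{1/2}. -/

import Mathlib

/-- The relative pressure potential `G(ρ) = ρ ∫_{ρ̄}^{ρ} s⁻²(p(s) - p̄) ds`
    with `p(s) = a s^γ`. -/
noncomputable def Gfun (a γ ρb ρ : ℝ) : ℝ :=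
  ρ * ∫ s in ρb..ρ, (a * s ^ γ - a * ρb ^ γ) / s ^ 2

/-- Kanel''s function `Ψ(ρ) = ∫_{ρ̄}^{ρ} √(G(s)) / s^{3/2} ds`. -/
noncomputable def PsiFun (a γ ρb ρ : ℝ) : ℝ :=
  ∫ s in ρb..ρ, Real.sqrt (Gfun a γ ρb s) / s ^ ((3 : ℝ) / 2)

open MeasureTheory intervalIntegral Set Real Topology

section aux

variable {a γ ρb : ℝ} (ha : 0 < a) (hγ : 1 ≤ γ) (hρb : 0 < ρb)

lemma hcont_integrand : ContinuousOn (fun s : ℝ => (a * s ^ γ - a * ρb ^ γ) / s ^ 2) (Set.Ioi 0) := by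
  apply ContinuousOn.div
  · exact (continuousOn_const.mul (fun s hs =>
      (Real.continuousAt_rpow_const s γ (Or.inl (ne_of_gt hs))).continuousWithinAt)).sub
      continuousOn_const
  · exact (continuous_pow 2).continuousOn
  · intro s hs
    have : (0:ℝ) < s := hs
    positivity

include hρb in
lemma Gfun_nonneg (hγ0 : 0 ≤ γ) (ha0 : 0 ≤ a) : ∀ ρ : ℝ, 0 < ρ → 0 ≤ Gfun a γ ρb ρ := by
  intro ρ hρ
  unfold Gfun
  rcases le_total ρb ρ with h | h
  · refine mul_nonneg hρ.le (intervalIntegral.integral_nonneg h ?_)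
    intro u hu
    have hu0 : 0 < u := lt_of_lt_of_le hρb hu.1
    apply div_nonneg _ (by positivity)
    have : ρb ^ γ ≤ u ^ γ := Real.rpow_le_rpow hρb.le hu.1 hγ0
    nlinarith
  · refine mul_nonneg hρ.le ?_
    rw [intervalIntegral.integral_symm]
    have : (∫ s in ρ..ρb, (a * s ^ γ - a * ρb ^ γ) / s ^ 2) ≤ 0 := by
      have := intervalIntegral.integral_nonneg (f := fun s : ℝ =>
          -((a * s ^ γ - a * ρb ^ γ) / s ^ 2)) (μ := volume) h ?_
      · rw [intervalIntegral.integral_neg] at this; linarith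
      · intro u hu
        have hu0 : 0 < u := lt_of_lt_of_le hρ hu.1
        rw [neg_nonneg]
        apply div_nonpos_of_nonpos_of_nonneg _ (by positivity)
        have : u ^ γ ≤ ρb ^ γ := Real.rpow_le_rpow hu0.le hu.2 hγ0
        nlinarith
    linarith

include hρb in
lemma Gfun_contOn : ContinuousOn (Gfun a γ ρb) (Set.Ioi 0) := by
  have hF : ∀ ρ ∈ Set.Ioi (0:ℝ), HasDerivAt (fun r => ∫ s in ρb..r, (a * s ^ γ - a * ρb ^ γ) / s ^ 2)
      ((a * ρ ^ γ - a * ρb ^ γ) / ρ ^ 2) ρ := by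
    intro ρ hρ
    have hsub : Set.uIcc ρb ρ ⊆ Set.Ioi (0:ℝ) := fun s hs =>
      lt_of_lt_of_le (lt_min hρb hρ) hs.1
    exact intervalIntegral.integral_hasDerivAt_right
      ((hcont_integrand.mono hsub).intervalIntegrable)
      (hcont_integrand.stronglyMeasurableAtFilter isOpen_Ioi ρ hρ)
      (hcont_integrand.continuousAt (isOpen_Ioi.mem_nhds hρ))
  refine continuousOn_id.mul (fun ρ hρ => ((hF ρ hρ).continuousAt).continuousWithinAt)

end aux

section aux2
variable {a γ ρb : ℝ}

lemma phi_contOn (hρb : 0 < ρb) :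
    ContinuousOn (fun s : ℝ => Real.sqrt (Gfun a γ ρb s) / s ^ ((3:ℝ)/2)) (Set.Ioi 0) := by
  apply ContinuousOn.div
  · exact Real.continuous_sqrt.comp_continuousOn (Gfun_contOn hρb)
  · exact fun s hs => (Real.continuousAt_rpow_const s _ (Or.inl (ne_of_gt hs))).continuousWithinAt
  · intro s hs
    exact ne_of_gt (Real.rpow_pos_of_pos hs _)

/-- Cauchy–Schwarz for interval integrals of nonnegative continuous functions. -/
lemma cauchy_schwarz_interval {c d : ℝ} (hcd : c ≤ d) {u v : ℝ → ℝ}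
    (hu : ContinuousOn u (Set.Icc c d)) (hv : ContinuousOn v (Set.Icc c d))
    (hu0 : ∀ y ∈ Set.Icc c d, 0 ≤ u y) (hv0 : ∀ y ∈ Set.Icc c d, 0 ≤ v y) :
    (∫ y in c..d, u y * v y) ≤
      Real.sqrt (∫ y in c..d, u y ^ 2) * Real.sqrt (∫ y in c..d, v y ^ 2) := by
  have hμ : Fact ((volume : Measure ℝ) (Set.Ioc c d) < ⊤) := ⟨by
    rw [Real.volume_Ioc]; exact ENNReal.ofReal_lt_top⟩
  haveI := hμ
  set μ := (volume : Measure ℝ).restrict (Set.Ioc c d)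
  have hpq : Real.HolderConjugate 2 2 := Real.HolderConjugate.two_two
  have hbd : ∃ C : ℝ, ∀ y ∈ Set.Icc c d, |u y| ≤ C ∧ |v y| ≤ C := by
    obtain ⟨C₁, hC₁⟩ := (isCompact_Icc.image_of_continuousOn hu).isBounded.subset_closedBall 0
    obtain ⟨C₂, hC₂⟩ := (isCompact_Icc.image_of_continuousOn hv).isBounded.subset_closedBall 0
    refine ⟨max C₁ C₂, fun y hy => ⟨?_, ?_⟩⟩
    · have := hC₁ (Set.mem_image_of_mem u hy)
      simp only [Metric.mem_closedBall, Real.dist_eq, sub_zero] at this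
      exact this.trans (le_max_left _ _)
    · have := hC₂ (Set.mem_image_of_mem v hy)
      simp only [Metric.mem_closedBall, Real.dist_eq, sub_zero] at this
      exact this.trans (le_max_right _ _)
  obtain ⟨C, hC⟩ := hbd
  have humeas : AEStronglyMeasurable u μ :=
    (hu.mono Set.Ioc_subset_Icc_self).aestronglyMeasurable measurableSet_Ioc
  have hvmeas : AEStronglyMeasurable v μ :=
    (hv.mono Set.Ioc_subset_Icc_self).aestronglyMeasurable measurableSet_Ioc
  have haeIcc : ∀ᵐ y ∂μ, y ∈ Set.Icc c d := by
    refine (MeasureTheory.ae_restrict_iff' measurableSet_Ioc).2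
      (Filter.Eventually.of_forall fun y hy => Set.Ioc_subset_Icc_self hy)
  have hul2 : MeasureTheory.MemLp u (ENNReal.ofReal 2) μ := by
    refine MeasureTheory.MemLp.of_bound humeas C ?_
    filter_upwards [haeIcc] with y hy
    simpa [Real.norm_eq_abs] using (hC y hy).1
  have hvl2 : MeasureTheory.MemLp v (ENNReal.ofReal 2) μ := by
    refine MeasureTheory.MemLp.of_bound hvmeas C ?_
    filter_upwards [haeIcc] with y hy
    simpa [Real.norm_eq_abs] using (hC y hy).2
  have hu0' : 0 ≤ᵐ[μ] u := by filter_upwards [haeIcc] with y hy; exact hu0 y hy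
  have hv0' : 0 ≤ᵐ[μ] v := by filter_upwards [haeIcc] with y hy; exact hv0 y hy
  have H := MeasureTheory.integral_mul_le_Lp_mul_Lq_of_nonneg hpq hu0' hv0' hul2 hvl2
  rw [intervalIntegral.integral_of_le hcd, intervalIntegral.integral_of_le hcd,
    intervalIntegral.integral_of_le hcd]
  calc ∫ y in Set.Ioc c d, u y * v y = ∫ y, u y * v y ∂μ := rfl
    _ ≤ (∫ y, u y ^ (2:ℝ) ∂μ) ^ ((1:ℝ)/2) * (∫ y, v y ^ (2:ℝ) ∂μ) ^ ((1:ℝ)/2) := H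
    _ = Real.sqrt (∫ y in Set.Ioc c d, u y ^ 2) * Real.sqrt (∫ y in Set.Ioc c d, v y ^ 2) := by
        rw [Real.sqrt_eq_rpow, Real.sqrt_eq_rpow]
        have h2 : ∀ x : ℝ, x ^ (2:ℝ) = x ^ (2:ℕ) := fun x => by
          rw [← Real.rpow_natCast x 2]; norm_num
        simp_rw [h2]
        rfl
end aux2

theorem abs_PsiFun_le_energy_bound (a γ ρb : ℝ)
    (ha : 0 < a) (hγ : 1 ≤ γ) (hρb : 0 < ρb)
    (L : ℝ) (hL : 0 < L) (ρ : ℝ → ℝ)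
    (hρ : ContDiffOn ℝ 1 ρ (Set.Icc 0 L))
    (hpos : ∀ x ∈ Set.Icc (0 : ℝ) L, 0 < ρ x)
    (hx₀ : ∃ x₀ ∈ Set.Icc (0 : ℝ) L, ρ x₀ = ρb) :
    ∀ x ∈ Set.Icc (0 : ℝ) L,
      |PsiFun a γ ρb (ρ x)| ≤
        Real.sqrt (∫ y in (0 : ℝ)..L, Gfun a γ ρb (ρ y)) *
          Real.sqrt (∫ y in (0 : ℝ)..L, ρ y * (deriv (fun z => 1 / ρ z) y) ^ 2) := by
  obtain ⟨x₀, hx₀m, hx₀v⟩ := hx₀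
  intro x hx
  have hγ0 : (0:ℝ) ≤ γ := le_trans zero_le_one hγ
  set ρ' := derivWithin ρ (Set.Icc 0 L) with hρ'def
  have hρc : ContinuousOn ρ (Set.Icc 0 L) := hρ.continuousOn
  have hρ'c : ContinuousOn ρ' (Set.Icc 0 L) :=
    hρ.continuousOn_derivWithin (uniqueDiffOn_Icc hL) le_rfl
  have hder : ∀ y ∈ Set.Ioo (0:ℝ) L, HasDerivAt ρ (ρ' y) y := by
    intro y hy
    have hmem : Set.Icc (0:ℝ) L ∈ 𝓝 y := Icc_mem_nhds hy.1 hy.2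
    have h1 : DifferentiableAt ℝ ρ y :=
      ((hρ.differentiableOn one_ne_zero) y (Set.Ioo_subset_Icc_self hy)).differentiableAt hmem
    rw [hρ'def, derivWithin_of_mem_nhds hmem]
    exact h1.hasDerivAt
  set g : ℝ → ℝ := fun s => Real.sqrt (Gfun a γ ρb s) / s ^ ((3:ℝ)/2) with hgdef
  set c : ℝ := min x₀ x with hcdef
  set d : ℝ := max x₀ x with hddef
  have hc0 : 0 ≤ c := le_min hx₀m.1 hx.1
  have hdL : d ≤ L := max_le hx₀m.2 hx.2
  have hcd : c ≤ d := min_le_max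
  have hsub : Set.Icc c d ⊆ Set.Icc 0 L := Set.Icc_subset_Icc hc0 hdL
  have huIcc : Set.uIcc x₀ x = Set.Icc c d := rfl
  have hsub' : Set.uIcc x₀ x ⊆ Set.Icc 0 L := huIcc ▸ hsub
  have himg : ρ '' (Set.uIcc x₀ x) ⊆ Set.Ioi 0 := by
    rintro _ ⟨y, hy, rfl⟩; exact hpos y (hsub' hy)
  have hff' : ∀ y ∈ Set.Ioo (min x₀ x) (max x₀ x),
      HasDerivWithinAt ρ (ρ' y) (Set.Ioi y) y := fun y hy =>
    ((hder y ⟨lt_of_le_of_lt hc0 hy.1, lt_of_lt_of_le hy.2 hdL⟩).hasDerivWithinAt)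
  have key := intervalIntegral.integral_comp_smul_deriv'' (a := x₀) (b := x)
    (f := ρ) (f' := ρ') (g := g) (hρc.mono hsub') hff' (hρ'c.mono hsub')
    ((phi_contOn hρb).mono himg)
  simp only [Function.comp, smul_eq_mul] at key
  have hPsi : PsiFun a γ ρb (ρ x) = ∫ y in x₀..x, ρ' y * g (ρ y) := by
    rw [key, PsiFun, hx₀v]
  -- pointwise functions
  set u : ℝ → ℝ := fun y => Real.sqrt (Gfun a γ ρb (ρ y)) with hudef
  set v : ℝ → ℝ := fun y => Real.sqrt (ρ' y ^ 2 / ρ y ^ 3) with hvdef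
  set w : ℝ → ℝ := fun y => ρ' y ^ 2 / ρ y ^ 3 with hwdef
  have hGnn : ∀ y ∈ Set.Icc (0:ℝ) L, 0 ≤ Gfun a γ ρb (ρ y) := fun y hy =>
    Gfun_nonneg hρb hγ0 ha.le (ρ y) (hpos y hy)
  have heq : ∀ y ∈ Set.Icc c d, |ρ' y * g (ρ y)| = u y * v y := by
    intro y hy
    have hry : 0 < ρ y := hpos y (hsub hy)
    have hG : 0 ≤ Gfun a γ ρb (ρ y) := hGnn y (hsub hy)
    have hr32 : Real.sqrt (ρ y ^ 3) = ρ y ^ ((3:ℝ)/2) := by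
      rw [Real.sqrt_eq_rpow, ← Real.rpow_natCast (ρ y) 3, ← Real.rpow_mul hry.le]
      norm_num
    have hv' : v y = |ρ' y| / ρ y ^ ((3:ℝ)/2) := by
      show Real.sqrt (ρ' y ^ 2 / ρ y ^ 3) = _
      rw [Real.sqrt_div (sq_nonneg _), Real.sqrt_sq_eq_abs, hr32]
    have hgnn : 0 ≤ g (ρ y) :=
      div_nonneg (Real.sqrt_nonneg _) (Real.rpow_pos_of_pos hry _).le
    rw [abs_mul, abs_of_nonneg hgnn, hv']
    show |ρ' y| * (Real.sqrt (Gfun a γ ρb (ρ y)) / ρ y ^ ((3:ℝ)/2)) = _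
    ring
  have hfirst : |PsiFun a γ ρb (ρ x)| ≤ ∫ y in c..d, u y * v y := by
    have h1 : |∫ y in x₀..x, ρ' y * g (ρ y)| = |∫ y in c..d, ρ' y * g (ρ y)| := by
      rcases le_total x₀ x with h | h
      · rw [hcdef, hddef, min_eq_left h, max_eq_right h]
      · rw [hcdef, hddef, min_eq_right h, max_eq_left h,
          intervalIntegral.integral_symm, abs_neg]
    have h2 : |∫ y in c..d, ρ' y * g (ρ y)| ≤ ∫ y in c..d, |ρ' y * g (ρ y)| := by
      simpa only [Real.norm_eq_abs] using
        intervalIntegral.norm_integral_le_integral_norm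
          (f := fun y => ρ' y * g (ρ y)) (μ := volume) hcd
    have h3 : (∫ y in c..d, |ρ' y * g (ρ y)|) = ∫ y in c..d, u y * v y := by
      apply intervalIntegral.integral_congr
      rw [Set.uIcc_of_le hcd]
      exact heq
    rw [hPsi, h1]
    exact h2.trans_eq h3
  -- continuity facts
  have hGcont : ContinuousOn (fun y => Gfun a γ ρb (ρ y)) (Set.Icc 0 L) :=
    (Gfun_contOn hρb).comp hρc (fun y hy => hpos y hy)
  have hwcont : ContinuousOn w (Set.Icc 0 L) := by
    apply ContinuousOn.div (hρ'c.pow 2) (hρc.pow 3)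
    intro y hy
    have := hpos y hy
    exact pow_ne_zero _ (ne_of_gt this)
  have hucont : ContinuousOn u (Set.Icc c d) :=
    Real.continuous_sqrt.comp_continuousOn (hGcont.mono hsub)
  have hvcont : ContinuousOn v (Set.Icc c d) :=
    Real.continuous_sqrt.comp_continuousOn (hwcont.mono hsub)
  have hCS := cauchy_schwarz_interval hcd hucont hvcont
    (fun y _ => Real.sqrt_nonneg _) (fun y _ => Real.sqrt_nonneg _)
  have hu2 : (∫ y in c..d, u y ^ 2) = ∫ y in c..d, Gfun a γ ρb (ρ y) := by
    apply intervalIntegral.integral_congr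
    rw [Set.uIcc_of_le hcd]
    intro y hy
    exact Real.sq_sqrt (hGnn y (hsub hy))
  have hv2 : (∫ y in c..d, v y ^ 2) = ∫ y in c..d, w y := by
    apply intervalIntegral.integral_congr
    rw [Set.uIcc_of_le hcd]
    intro y hy
    have hry : 0 < ρ y := hpos y (hsub hy)
    exact Real.sq_sqrt (by positivity)
  -- monotone in interval
  have hwnn : ∀ y ∈ Set.Icc (0:ℝ) L, 0 ≤ w y := by
    intro y hy
    have := hpos y hy
    positivity
  have hmono : ∀ (F : ℝ → ℝ), ContinuousOn F (Set.Icc 0 L) →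
      (∀ y ∈ Set.Icc (0:ℝ) L, 0 ≤ F y) → (∫ y in c..d, F y) ≤ ∫ y in (0:ℝ)..L, F y := by
    intro F hFc hF0
    apply intervalIntegral.integral_mono_interval hc0 hcd hdL
    · refine (MeasureTheory.ae_restrict_iff' measurableSet_Ioc).2
        (Filter.Eventually.of_forall fun y hy => hF0 y (Set.Ioc_subset_Icc_self hy))
    · exact (hFc.mono (Set.uIcc_of_le hL.le).subset).intervalIntegrable
  -- replace deriv with w in the RHS integral
  have hrhs : (∫ y in (0:ℝ)..L, ρ y * (deriv (fun z => 1 / ρ z) y) ^ 2)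
      = ∫ y in (0:ℝ)..L, w y := by
    apply intervalIntegral.integral_congr_ae
    have hLne : ∀ᵐ y : ℝ ∂volume, y ≠ L := by
      refine MeasureTheory.ae_iff.2 ?_
      simp
    filter_upwards [hLne] with y hyne hymem
    rw [Set.uIoc_of_le hL.le] at hymem
    have hy : y ∈ Set.Ioo (0:ℝ) L := ⟨hymem.1, lt_of_le_of_ne hymem.2 hyne⟩
    have hry : 0 < ρ y := hpos y (Set.Ioo_subset_Icc_self hy)
    have hinv : HasDerivAt (fun z => 1 / ρ z) (-ρ' y / ρ y ^ 2) y := by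
      simpa only [one_div] using (hder y hy).fun_inv (ne_of_gt hry)
    rw [hinv.deriv, hwdef]
    field_simp
  have hstep2 : Real.sqrt (∫ y in c..d, u y ^ 2) ≤
      Real.sqrt (∫ y in (0:ℝ)..L, Gfun a γ ρb (ρ y)) := by
    rw [hu2]
    exact Real.sqrt_le_sqrt (hmono _ hGcont hGnn)
  have hstep3 : Real.sqrt (∫ y in c..d, v y ^ 2) ≤
      Real.sqrt (∫ y in (0:ℝ)..L, ρ y * (deriv (fun z => 1 / ρ z) y) ^ 2) := by
    rw [hv2, hrhs]
    exact Real.sqrt_le_sqrt (hmono _ hwcont hwnn)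
  calc |PsiFun a γ ρb (ρ x)| ≤ ∫ y in c..d, u y * v y := hfirst
    _ ≤ Real.sqrt (∫ y in c..d, u y ^ 2) * Real.sqrt (∫ y in c..d, v y ^ 2) := hCS
    _ ≤ _ := mul_le_mul hstep2 hstep3 (Real.sqrt_nonneg _) (Real.sqrt_nonneg _)
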